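/- Let (X, μ) be a finite measure space, δ a positive integer, and M > 0. Let (u_n) be a sequence of measurable real-valued functions and u a measurable real-valued function such that: (i) ∫ |u_n − u|² dμ → 0 as n → ∞; (ii) ‖u_n‖_{L^{2(δ+1)}(μ)} ≤ M for all n; (iii) u ∈ L^{2(δ+1)}(μ). Then for every measurable essentially bounded g : X → ℝ, ∫ u_n^{2δ+1}·g dμ → ∫ u^{2δ+1}·g dμ as n → ∞. -/

import Mathlib

open MeasureTheory Filter

/-- The L^p(μ) norm ‖f‖_{L^p(μ)} = (∫ |f|^p dμ)^{1/p}. -/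
noncomputable def lpNormR {X : Type*} [MeasurableSpace X] (μ : Measure X) (p : ℕ)
    (f : X → ℝ) : ℝ :=
  (∫ x, |f x| ^ p ∂μ) ^ ((1 : ℝ) / p)

-- helper: |a^k - b^k| ≤ k * (|a|+|b|)^(k-1) * |a-b|
lemma aux_pow_sub_pow (a b : ℝ) (k : ℕ) :
    |a ^ k - b ^ k| ≤ (k : ℝ) * (|a| + |b|) ^ (k - 1) * |a - b| := by
  rw [← geom_sum₂_mul a b k, abs_mul]
  gcongr
  calc |∑ i ∈ Finset.range k, a ^ i * b ^ (k - 1 - i)|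
      ≤ ∑ i ∈ Finset.range k, |a ^ i * b ^ (k - 1 - i)| := Finset.abs_sum_le_sum_abs _ _
    _ ≤ ∑ i ∈ Finset.range k, (|a| + |b|) ^ (k - 1) := by
        refine Finset.sum_le_sum fun i hi => ?_
        rw [abs_mul, abs_pow, abs_pow]
        have hik : i ≤ k - 1 := Nat.le_sub_one_of_lt (Finset.mem_range.mp hi)
        calc |a| ^ i * |b| ^ (k - 1 - i)
            ≤ (|a| + |b|) ^ i * (|a| + |b|) ^ (k - 1 - i) := by
              have h1 : |a| ^ i ≤ (|a| + |b|) ^ i :=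
                pow_le_pow_left₀ (abs_nonneg a) (le_add_of_nonneg_right (abs_nonneg b)) i
              have h2 : |b| ^ (k - 1 - i) ≤ (|a| + |b|) ^ (k - 1 - i) :=
                pow_le_pow_left₀ (abs_nonneg b) (le_add_of_nonneg_left (abs_nonneg a)) _
              exact mul_le_mul h1 h2 (by positivity) (by positivity)
          _ = (|a| + |b|) ^ (k - 1) := by
              rw [← pow_add, Nat.add_sub_cancel' hik]
    _ = (k : ℝ) * (|a| + |b|) ^ (k - 1) := by
        rw [Finset.sum_const, Finset.card_range, nsmul_eq_mul]

-- helper: a^i ≤ 1 + a^j for 0 ≤ a, i ≤ j (real)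
lemma aux_pow_le_one_add (a : ℝ) (ha : 0 ≤ a) {i j : ℕ} (hij : i ≤ j) :
    a ^ i ≤ 1 + a ^ j := by
  rcases le_or_gt a 1 with h | h
  · have : a ^ i ≤ 1 := pow_le_one₀ ha h
    nlinarith [pow_nonneg ha j]
  · have : a ^ i ≤ a ^ j := pow_le_pow_right₀ h.le hij
    nlinarith

-- helper (ENNReal): a^i ≤ 1 + a^j for i ≤ j
lemma aux_epow_le_one_add (a : ENNReal) {i j : ℕ} (hij : i ≤ j) :
    a ^ i ≤ 1 + a ^ j := by
  rcases le_or_gt a 1 with h | h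
  · exact le_add_of_le_of_nonneg (pow_le_one₀ zero_le h) zero_le
  · exact le_add_of_nonneg_of_le zero_le (pow_le_pow_right₀ h.le hij)

-- helper (ENNReal): (a+b)^m ≤ 2^m * (a^m + b^m)
lemma aux_add_pow_le (a b : ENNReal) (m : ℕ) :
    (a + b) ^ m ≤ 2 ^ m * (a ^ m + b ^ m) := by
  calc (a + b) ^ m ≤ (2 * max a b) ^ m := by
        gcongr
        rcases le_total a b with h | h
        · rw [max_eq_right h, two_mul]; exact add_le_add_left h b
        · rw [max_eq_left h, two_mul]; exact add_le_add_right h a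
    _ = 2 ^ m * max a b ^ m := mul_pow 2 (max a b) m
    _ ≤ 2 ^ m * (a ^ m + b ^ m) := by
        gcongr
        rcases le_total a b with h | h
        · rw [max_eq_right h]; exact le_add_self
        · rw [max_eq_left h]; exact le_add_right (le_refl _)

-- real version of add_pow bound
lemma aux_add_pow_le_real (a b : ℝ) (ha : 0 ≤ a) (hb : 0 ≤ b) (m : ℕ) :
    (a + b) ^ m ≤ 2 ^ m * (a ^ m + b ^ m) := by
  calc (a + b) ^ m ≤ (2 * max a b) ^ m := by
        apply pow_le_pow_left₀ (by positivity)
        rcases le_total a b with h | h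
        · rw [max_eq_right h, two_mul]; exact add_le_add_left h b
        · rw [max_eq_left h, two_mul]; exact add_le_add_right h a
    _ = 2 ^ m * max a b ^ m := mul_pow 2 (max a b) m
    _ ≤ 2 ^ m * (a ^ m + b ^ m) := by
        apply mul_le_mul_of_nonneg_left _ (by positivity)
        rcases le_total a b with h | h
        · rw [max_eq_right h]; exact le_add_of_nonneg_left (by positivity)
        · rw [max_eq_left h]; exact le_add_of_nonneg_right (by positivity)

/-- Convergence of the highest-order reaction term (paper's estimate (216)): on a finite
measure space, if ∫|u_n − u|² dμ → 0, the u_n ∈ L^{2(δ+1)}(μ) are uniformly bounded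
by M in the L^{2(δ+1)} norm, and u ∈ L^{2(δ+1)}(μ), then for every measurable
essentially bounded g, ∫ u_n^{2δ+1}·g dμ → ∫ u^{2δ+1}·g dμ. -/
theorem stmt_16 {X : Type*} [MeasurableSpace X] (μ : Measure X) [IsFiniteMeasure μ]
    (δ : ℕ) (hδ : 0 < δ) (M : ℝ) (hM : 0 < M)
    (un : ℕ → X → ℝ) (u : X → ℝ)
    (hun : ∀ n, Measurable (un n)) (hu : Measurable u)
    (hconv : Tendsto (fun n => ∫ x, |un n x - u x| ^ 2 ∂μ) atTop (nhds 0))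
    (hunp : ∀ n, Integrable (fun x => |un n x| ^ (2 * (δ + 1))) μ)
    (hbdd : ∀ n, lpNormR μ (2 * (δ + 1)) (un n) ≤ M)
    (hup : Integrable (fun x => |u x| ^ (2 * (δ + 1))) μ) :
    ∀ g : X → ℝ, Measurable g → eLpNorm g ⊤ μ < ⊤ →
      Tendsto (fun n => ∫ x, un n x ^ (2 * δ + 1) * g x ∂μ) atTop
        (nhds (∫ x, u x ^ (2 * δ + 1) * g x ∂μ)) := by
  intro g hg hgC
  set k := 2 * δ + 1 with hk
  set m := 2 * (δ + 1) with hm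
  have hkm : k ≤ m := by omega
  have h2m : 2 ≤ m := by omega
  set C := eLpNorm g ⊤ μ with hC
  have hCne : C ≠ ⊤ := hgC.ne
  -- a.e. bounds for g
  have hgae : ∀ᵐ x ∂μ, ENNReal.ofReal |g x| ≤ C := by
    filter_upwards [ae_le_eLpNormEssSup (f := g) (μ := μ)] with x hx
    rw [hC, eLpNorm_exponent_top]
    rwa [← Real.enorm_eq_ofReal_abs]
  have hgr : ∀ᵐ x ∂μ, |g x| ≤ C.toReal := by
    filter_upwards [hgae] with x hx
    have := ENNReal.toReal_mono hCne hx
    rwa [ENNReal.toReal_ofReal (abs_nonneg _)] at this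
  -- integrability of v^k * g
  have key_int : ∀ v : X → ℝ, Measurable v → Integrable (fun x => |v x| ^ m) μ →
      Integrable (fun x => v x ^ k * g x) μ := by
    intro v hv hvm
    have hdom : Integrable (fun x => (1 + |v x| ^ m) * C.toReal) μ :=
      ((integrable_const 1).add hvm).mul_const _
    refine hdom.mono' (((hv.pow_const k).mul hg).aestronglyMeasurable) ?_
    filter_upwards [hgr] with x hx
    rw [Real.norm_eq_abs, abs_mul, abs_pow]
    have h1 : |v x| ^ k ≤ 1 + |v x| ^ m := aux_pow_le_one_add _ (abs_nonneg _) hkm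
    exact mul_le_mul h1 hx (abs_nonneg _) (by positivity)
  -- integral bound from the norm bound
  have hmne : (m : ℝ) ≠ 0 := by positivity
  have hMn : ∀ n, ∫ x, |un n x| ^ m ∂μ ≤ M ^ m := by
    intro n
    have hI0 : 0 ≤ ∫ x, |un n x| ^ m ∂μ :=
      integral_nonneg fun x => by positivity
    have hb := hbdd n
    rw [lpNormR] at hb
    have h := Real.rpow_le_rpow (Real.rpow_nonneg hI0 _) hb (Nat.cast_nonneg m)
    rwa [← Real.rpow_mul hI0, one_div_mul_cancel hmne, Real.rpow_one,
      Real.rpow_natCast] at h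
  -- ENNReal players
  set H : ℕ → X → ENNReal := fun n x => ENNReal.ofReal |un n x - u x| with hHdef
  set S : ℕ → X → ENNReal := fun n x => ENNReal.ofReal |un n x| + ENNReal.ofReal |u x| with hSdef
  have hHmeas : ∀ n, Measurable (H n) := fun n => ((hun n).sub hu).abs.ennreal_ofReal
  have hSmeas : ∀ n, Measurable (S n) := fun n =>
    ((hun n).abs.ennreal_ofReal).add (hu.abs.ennreal_ofReal)
  -- uniform L^m bounds
  set Bu := ENNReal.ofReal (∫ x, |u x| ^ m ∂μ) with hBu
  have hVle : ∫⁻ x, (ENNReal.ofReal |u x|) ^ m ∂μ = Bu := by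
    rw [hBu, ofReal_integral_eq_lintegral_ofReal hup
      (Filter.Eventually.of_forall fun x => by positivity)]
    refine lintegral_congr fun x => ?_
    rw [ENNReal.ofReal_pow (abs_nonneg _)]
  have hUle : ∀ n, ∫⁻ x, (ENNReal.ofReal |un n x|) ^ m ∂μ ≤ ENNReal.ofReal (M ^ m) := by
    intro n
    have : ∫⁻ x, (ENNReal.ofReal |un n x|) ^ m ∂μ = ENNReal.ofReal (∫ x, |un n x| ^ m ∂μ) := by
      rw [ofReal_integral_eq_lintegral_ofReal (hunp n)
        (Filter.Eventually.of_forall fun x => by positivity)]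
      exact lintegral_congr fun x => by rw [ENNReal.ofReal_pow (abs_nonneg _)]
    rw [this]
    exact ENNReal.ofReal_le_ofReal (hMn n)
  set B : ENNReal := 2 ^ m * (ENNReal.ofReal (M ^ m) + Bu) with hBdef
  have hBne : B ≠ ⊤ := by
    rw [hBdef, hBu]
    exact ENNReal.mul_ne_top (by simp) (ENNReal.add_ne_top.mpr ⟨by simp, by simp⟩)
  have hSm : ∀ n, ∫⁻ x, S n x ^ m ∂μ ≤ B := by
    intro n
    calc ∫⁻ x, S n x ^ m ∂μ
        ≤ ∫⁻ x, 2 ^ m * ((ENNReal.ofReal |un n x|) ^ m + (ENNReal.ofReal |u x|) ^ m) ∂μ :=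
          lintegral_mono fun x => aux_add_pow_le _ _ m
      _ = 2 ^ m * (∫⁻ x, (ENNReal.ofReal |un n x|) ^ m ∂μ
            + ∫⁻ x, (ENNReal.ofReal |u x|) ^ m ∂μ) := by
          rw [lintegral_const_mul' _ _ (by simp),
            lintegral_add_left ((hun n).abs.ennreal_ofReal.pow_const m)]
      _ ≤ B := by
          rw [hBdef]
          exact mul_le_mul_right (add_le_add (hUle n) hVle.le) _
  have hHS : ∀ n x, H n x ≤ S n x := by
    intro n x
    show ENNReal.ofReal |un n x - u x| ≤ ENNReal.ofReal |un n x| + ENNReal.ofReal |u x|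
    rw [← ENNReal.ofReal_add (abs_nonneg _) (abs_nonneg _)]
    exact ENNReal.ofReal_le_ofReal (abs_sub _ _)
  have hHm : ∀ n, ∫⁻ x, H n x ^ m ∂μ ≤ B := fun n =>
    le_trans (lintegral_mono fun x => pow_le_pow_left' (hHS n x) m) (hSm n)
  set K2 : ENNReal := μ Set.univ + B with hK2def
  have hK2ne : K2 ≠ ⊤ := ENNReal.add_ne_top.mpr ⟨measure_ne_top μ _, hBne⟩
  have hH2δ : ∀ n, ∫⁻ x, H n x ^ (2 * δ) ∂μ ≤ K2 := by
    intro n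
    calc ∫⁻ x, H n x ^ (2 * δ) ∂μ
        ≤ ∫⁻ x, (1 + H n x ^ m) ∂μ :=
          lintegral_mono fun x => aux_epow_le_one_add _ (by omega)
      _ = μ Set.univ + ∫⁻ x, H n x ^ m ∂μ := by
          rw [lintegral_add_left measurable_const, lintegral_one]
      _ ≤ K2 := add_le_add_right (hHm n) _
  -- integrability of |un - u|^2 and L² convergence in ENNReal form
  have hint2 : ∀ n, Integrable (fun x => |un n x - u x| ^ 2) μ := by
    intro n
    have hdom : Integrable (fun x => 1 + 2 ^ m * (|un n x| ^ m + |u x| ^ m)) μ :=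
      (integrable_const 1).add (((hunp n).add hup).const_mul _)
    refine hdom.mono' (((hun n).sub hu).abs.pow_const 2).aestronglyMeasurable ?_
    refine Filter.Eventually.of_forall fun x => ?_
    rw [Real.norm_eq_abs, abs_of_nonneg (by positivity)]
    have h1 : |un n x - u x| ^ 2 ≤ 1 + |un n x - u x| ^ m :=
      aux_pow_le_one_add _ (abs_nonneg _) h2m
    have h2 : |un n x - u x| ^ m ≤ (|un n x| + |u x|) ^ m :=
      pow_le_pow_left₀ (abs_nonneg _) (abs_sub _ _) m
    have h3 : (|un n x| + |u x|) ^ m ≤ 2 ^ m * (|un n x| ^ m + |u x| ^ m) :=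
      aux_add_pow_le_real _ _ (abs_nonneg _) (abs_nonneg _) m
    linarith
  set a : ℕ → ENNReal := fun n => ∫⁻ x, H n x ^ 2 ∂μ with hadef
  have hA : Tendsto a atTop (nhds 0) := by
    have heq : ∀ n, a n = ENNReal.ofReal (∫ x, |un n x - u x| ^ 2 ∂μ) := by
      intro n
      rw [hadef, ofReal_integral_eq_lintegral_ofReal (hint2 n)
        (Filter.Eventually.of_forall fun x => by positivity)]
      exact lintegral_congr fun x => (ENNReal.ofReal_pow (abs_nonneg _) 2).symm
    have ht := ENNReal.tendsto_ofReal (α := ℕ) hconv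
    rw [ENNReal.ofReal_zero] at ht
    have : a = fun n => ENNReal.ofReal (∫ x, |un n x - u x| ^ 2 ∂μ) := funext heq
    rw [this]
    exact ht
  -- Cauchy–Schwarz: ∫ H^{δ+1} ≤ K2^{1/2} * (a n)^{1/2}
  have hnat2 : ∀ y : ENNReal, y ^ (2:ℝ) = y ^ (2:ℕ) := fun y => by
    rw [← ENNReal.rpow_natCast]; norm_num
  have hCS : ∀ n, ∫⁻ x, H n x ^ (δ + 1) ∂μ
      ≤ K2 ^ ((1:ℝ)/2) * (a n) ^ ((1:ℝ)/2) := by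
    intro n
    have hpq2 : Real.HolderConjugate 2 2 := Real.holderConjugate_iff.mpr ⟨by norm_num, by norm_num⟩
    have h := ENNReal.lintegral_mul_le_Lp_mul_Lq μ hpq2
      ((hHmeas n).pow_const δ).aemeasurable (hHmeas n).aemeasurable
    have hL : ∫⁻ x, ((fun x => H n x ^ δ) * H n) x ∂μ = ∫⁻ x, H n x ^ (δ + 1) ∂μ :=
      lintegral_congr fun x => by rw [Pi.mul_apply, ← pow_succ]
    rw [hL] at h
    have hR1 : ∫⁻ x, ((fun x => H n x ^ δ) x) ^ (2:ℝ) ∂μ = ∫⁻ x, H n x ^ (2 * δ) ∂μ :=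
      lintegral_congr fun x => by rw [hnat2, ← pow_mul, mul_comm δ 2]
    have hR2 : ∫⁻ x, (H n x) ^ (2:ℝ) ∂μ = a n :=
      lintegral_congr fun x => by rw [hnat2]
    rw [hR1, hR2] at h
    exact h.trans (mul_le_mul_left (ENNReal.rpow_le_rpow (hH2δ n) (by norm_num)) _)
  -- Hölder with exponents (δ+1)/δ and δ+1
  have hδR : (0:ℝ) < δ := by exact_mod_cast hδ
  have hδ1 : (0:ℝ) < (δ:ℝ) + 1 := by linarith
  have hpq : Real.HolderConjugate (((δ:ℝ) + 1)/δ) ((δ:ℝ) + 1) := by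
    rw [Real.holderConjugate_iff]
    constructor
    · rw [lt_div_iff₀ hδR]; linarith
    · rw [inv_div]
      field_simp
  have hHold : ∀ n, ∫⁻ x, S n x ^ (2 * δ) * H n x ∂μ
      ≤ B ^ ((δ:ℝ)/((δ:ℝ) + 1)) * (∫⁻ x, H n x ^ (δ + 1) ∂μ) ^ (((δ:ℝ) + 1)⁻¹) := by
    intro n
    have h := ENNReal.lintegral_mul_le_Lp_mul_Lq μ hpq
      ((hSmeas n).pow_const (2 * δ)).aemeasurable (hHmeas n).aemeasurable
    have hL : ∫⁻ x, ((fun x => S n x ^ (2 * δ)) * H n) x ∂μ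
        = ∫⁻ x, S n x ^ (2 * δ) * H n x ∂μ :=
      lintegral_congr fun x => by rw [Pi.mul_apply]
    have hR1 : ∫⁻ x, ((fun x => S n x ^ (2 * δ)) x) ^ (((δ:ℝ) + 1)/δ) ∂μ
        = ∫⁻ x, S n x ^ m ∂μ := by
      refine lintegral_congr fun x => ?_
      show (S n x ^ (2 * δ) : ENNReal) ^ (((δ:ℝ) + 1)/(δ:ℝ)) = S n x ^ m
      rw [← ENNReal.rpow_natCast (S n x) (2 * δ), ← ENNReal.rpow_mul]
      rw [show ((2 * δ : ℕ) : ℝ) * (((δ:ℝ) + 1)/δ) = ((m : ℕ) : ℝ) by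
        push_cast [hm]; field_simp]
      rw [ENNReal.rpow_natCast]
    have hR2 : ∫⁻ x, (H n x) ^ ((δ:ℝ) + 1) ∂μ = ∫⁻ x, H n x ^ (δ + 1) ∂μ := by
      refine lintegral_congr fun x => ?_
      rw [← ENNReal.rpow_natCast (H n x) (δ + 1)]
      norm_num
    rw [hL, hR1, hR2] at h
    have h1p : 1/(((δ:ℝ) + 1)/δ) = (δ:ℝ)/((δ:ℝ) + 1) := one_div_div _ _
    rw [h1p, one_div] at h
    exact h.trans (mul_le_mul_left (ENNReal.rpow_le_rpow (hSm n) (by positivity)) _)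
  -- combine everything
  set e : ℝ := (1:ℝ)/2 * ((δ:ℝ) + 1)⁻¹ with hedef
  have he : 0 < e := by positivity
  set K : ENNReal := (k : ENNReal) * (B ^ ((δ:ℝ)/((δ:ℝ) + 1)) * K2 ^ e) * C with hKdef
  have hKne : K ≠ ⊤ := by
    rw [hKdef]
    exact ENNReal.mul_ne_top
      (ENNReal.mul_ne_top (ENNReal.natCast_ne_top k)
        (ENNReal.mul_ne_top (ENNReal.rpow_ne_top_of_nonneg (by positivity) hBne)
          (ENNReal.rpow_ne_top_of_nonneg he.le hK2ne))) hCne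
  have hkne : (k : ENNReal) ≠ ⊤ := ENNReal.natCast_ne_top k
  have hk1 : k - 1 = 2 * δ := by omega
  have hIle : ∀ n, (∫⁻ x, ‖un n x ^ k * g x - u x ^ k * g x‖₊ ∂μ) ≤ K * (a n) ^ e := by
    intro n
    have hptwise : ∀ x, ENNReal.ofReal |un n x ^ k - u x ^ k|
        ≤ (k : ENNReal) * (S n x ^ (2 * δ) * H n x) := by
      intro x
      have h1 := aux_pow_sub_pow (un n x) (u x) k
      rw [hk1] at h1
      calc ENNReal.ofReal |un n x ^ k - u x ^ k|
          ≤ ENNReal.ofReal ((k : ℝ) * (|un n x| + |u x|) ^ (2 * δ) * |un n x - u x|) :=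
            ENNReal.ofReal_le_ofReal h1
        _ = (k : ENNReal) * (S n x ^ (2 * δ) * H n x) := by
            rw [ENNReal.ofReal_mul (by positivity), ENNReal.ofReal_mul (by positivity),
              ENNReal.ofReal_natCast, ENNReal.ofReal_pow (by positivity),
              ENNReal.ofReal_add (abs_nonneg _) (abs_nonneg _), mul_assoc]
    calc ∫⁻ x, ‖un n x ^ k * g x - u x ^ k * g x‖₊ ∂μ
        = ∫⁻ x, ENNReal.ofReal |un n x ^ k - u x ^ k| * ENNReal.ofReal |g x| ∂μ := by
          refine lintegral_congr fun x => ?_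
          rw [← sub_mul, ← enorm_eq_nnnorm, Real.enorm_eq_ofReal_abs, abs_mul,
            ENNReal.ofReal_mul (abs_nonneg _)]
      _ ≤ ∫⁻ x, ENNReal.ofReal |un n x ^ k - u x ^ k| * C ∂μ :=
          lintegral_mono_ae (hgae.mono fun x hx => mul_le_mul_right hx _)
      _ = (∫⁻ x, ENNReal.ofReal |un n x ^ k - u x ^ k| ∂μ) * C :=
          lintegral_mul_const' C _ hCne
      _ ≤ ((k : ENNReal) * ∫⁻ x, S n x ^ (2 * δ) * H n x ∂μ) * C := by
          refine mul_le_mul_left ?_ C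
          refine le_trans (lintegral_mono hptwise) ?_
          rw [lintegral_const_mul' _ _ hkne]
      _ ≤ ((k : ENNReal) * (B ^ ((δ:ℝ)/((δ:ℝ) + 1))
            * ((K2 ^ ((1:ℝ)/2) * (a n) ^ ((1:ℝ)/2)) ^ (((δ:ℝ) + 1)⁻¹)))) * C := by
          refine mul_le_mul_left (mul_le_mul_right ?_ _) C
          refine (hHold n).trans (mul_le_mul_right ?_ _)
          exact ENNReal.rpow_le_rpow (hCS n) (by positivity)
      _ = K * (a n) ^ e := by
          have hsplit : (K2 ^ ((1:ℝ)/2) * (a n) ^ ((1:ℝ)/2)) ^ (((δ:ℝ) + 1)⁻¹)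
              = K2 ^ e * (a n) ^ e := by
            rw [ENNReal.mul_rpow_of_nonneg _ _ (by positivity), ← ENNReal.rpow_mul,
              ← ENNReal.rpow_mul, hedef]
          rw [hsplit, hKdef]
          ring
  -- conclude
  have h1 : Tendsto (fun n => (a n) ^ e) atTop (nhds 0) := by
    have hc := (ENNReal.continuous_rpow_const (y := e)).tendsto 0
    have := hc.comp hA
    rwa [ENNReal.zero_rpow_of_pos he] at this
  have h2 : Tendsto (fun n => K * (a n) ^ e) atTop (nhds 0) := by
    simpa using ENNReal.Tendsto.const_mul h1 (Or.inr hKne)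
  have hI0t : Tendsto (fun n => ∫⁻ x, ‖un n x ^ k * g x - u x ^ k * g x‖₊ ∂μ) atTop (nhds 0) :=
    tendsto_of_tendsto_of_tendsto_of_le_of_le tendsto_const_nhds h2
      (fun n => zero_le) hIle
  exact tendsto_integral_of_L1 _ (key_int u hu hup).aestronglyMeasurable
    (Filter.Eventually.of_forall fun n => key_int (un n) (hun n) (hunp n)) hI0t
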